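/- Let $a\in(-1,1)$, $\nu=(a-1)/2$, and define $h_1(z)=e^{-z/2}\sum_{k=0}^\infty \frac{(z/4)^{2k}}{k!\,\Gamma(k+\nu+1)}$ for $z>0$. Then $h_1$ satisfies the ODE $z h''(z)+(z+a)h'(z)+\frac a2 h(z)=0$ for all $z>0$. -/

import Mathlib

noncomputable section
open Real

/-- The solution `h₁(z) = e^{-z/2} ∑_{k≥0} (z/4)^{2k} / (k! Γ(k+ν+1))` with `ν = (a-1)/2`. -/
def h₁ (a z : ℝ) : ℝ :=
  Real.exp (-z / 2) *
    ∑' k : ℕ, (z / 4) ^ (2 * k) / ((Nat.factorial k : ℝ) * Real.Gamma ((k : ℝ) + (a - 1) / 2 + 1))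

namespace H1Ode

/-- Coefficients of the power series part of `h₁`. -/
def c (a : ℝ) (k : ℕ) : ℝ :=
  1 / ((Nat.factorial k : ℝ) * Real.Gamma ((k : ℝ) + (a - 1) / 2 + 1) * 16 ^ k)

lemma gamma_arg_pos {a : ℝ} (ha₁ : -1 < a) (k : ℕ) : 0 < (k : ℝ) + (a - 1) / 2 + 1 := by
  have : (0:ℝ) ≤ k := Nat.cast_nonneg k
  linarith

lemma gamma_pos {a : ℝ} (ha₁ : -1 < a) (k : ℕ) :
    0 < Real.Gamma ((k : ℝ) + (a - 1) / 2 + 1) :=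
  Real.Gamma_pos_of_pos (gamma_arg_pos ha₁ k)

lemma c_pos {a : ℝ} (ha₁ : -1 < a) (k : ℕ) : 0 < c a k := by
  have h1 := gamma_pos ha₁ k
  have h2 : (0:ℝ) < (Nat.factorial k : ℝ) := by positivity
  have h3 : (0:ℝ) < (16:ℝ) ^ k := by positivity
  unfold c; positivity

lemma c_nonneg {a : ℝ} (ha₁ : -1 < a) (k : ℕ) : 0 ≤ c a k := (c_pos ha₁ k).le

lemma c_rec {a : ℝ} (ha₁ : -1 < a) (k : ℕ) :
    c a (k + 1) * (16 * ((k : ℝ) + 1) * (((k : ℝ) + 1) + (a - 1) / 2)) = c a k := by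
  have harg : ((k : ℝ) + (a - 1) / 2 + 1) ≠ 0 := (gamma_arg_pos ha₁ k).ne'
  have hG : Real.Gamma (((k : ℝ) + 1) + (a - 1) / 2 + 1)
      = ((k : ℝ) + (a - 1) / 2 + 1) * Real.Gamma ((k : ℝ) + (a - 1) / 2 + 1) := by
    have : ((k : ℝ) + 1) + (a - 1) / 2 + 1 = ((k : ℝ) + (a - 1) / 2 + 1) + 1 := by ring
    rw [this, Real.Gamma_add_one harg]
  have hGpos := gamma_pos ha₁ k
  have hfac : ((Nat.factorial (k + 1) : ℝ)) = ((k : ℝ) + 1) * (Nat.factorial k : ℝ) := by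
    push_cast [Nat.factorial_succ]; ring
  unfold c
  rw [Nat.cast_add, Nat.cast_one, hG, hfac]
  have h2 : (0:ℝ) < (Nat.factorial k : ℝ) := by positivity
  have h3 : (0:ℝ) < (16:ℝ) ^ k := by positivity
  have hk1 : (0:ℝ) < (k : ℝ) + 1 := by positivity
  have hD1 : ((k : ℝ) + 1) * (Nat.factorial k : ℝ) * (((k : ℝ) + (a - 1) / 2 + 1) *
      Real.Gamma ((k : ℝ) + (a - 1) / 2 + 1)) * 16 ^ (k + 1) ≠ 0 := by
    have := (gamma_arg_pos ha₁ k); positivity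
  have hD2 : (Nat.factorial k : ℝ) * Real.Gamma ((k : ℝ) + (a - 1) / 2 + 1) * 16 ^ k ≠ 0 := by
    positivity
  rw [div_mul_eq_mul_div, one_mul, div_eq_div_iff hD1 hD2]
  ring

/-- Uniform lower bound for the Gamma values. -/
lemma gamma_lb {a : ℝ} (ha₁ : -1 < a) :
    ∃ m : ℝ, 0 < m ∧ ∀ k : ℕ, m ≤ Real.Gamma ((k : ℝ) + (a - 1) / 2 + 1) := by
  set ν : ℝ := (a - 1) / 2 with hν
  refine ⟨min (Real.Gamma (ν + 1)) (Real.Gamma (ν + 2)), ?_, ?_⟩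
  · have h1 : (0:ℝ) < ν + 1 := by simp [hν]; linarith
    have h2 : (0:ℝ) < ν + 2 := by linarith
    exact lt_min (Real.Gamma_pos_of_pos h1) (Real.Gamma_pos_of_pos h2)
  · intro k
    induction k with
    | zero => simpa using min_le_left _ _
    | succ k ih =>
      match k, ih with
      | 0, _ =>
        have : ((1:ℕ) : ℝ) + ν + 1 = ν + 2 := by push_cast; ring
        rw [this]
        exact min_le_right _ _
      | (j+1), ih =>
        have harg : ((j+1 : ℕ) : ℝ) + ν + 1 ≠ 0 := (gamma_arg_pos ha₁ (j+1)).ne'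
        have hG : Real.Gamma (((j+1+1 : ℕ) : ℝ) + ν + 1)
            = (((j+1 : ℕ) : ℝ) + ν + 1) * Real.Gamma (((j+1 : ℕ) : ℝ) + ν + 1) := by
          have : ((j+1+1 : ℕ) : ℝ) + ν + 1 = (((j+1 : ℕ) : ℝ) + ν + 1) + 1 := by
            push_cast; ring
          rw [this, Real.Gamma_add_one harg]
        rw [hG]
        have h1 : (1:ℝ) ≤ ((j+1 : ℕ) : ℝ) + ν + 1 := by
          have : (1:ℝ) ≤ ((j+1 : ℕ) : ℝ) := by exact_mod_cast Nat.one_le_iff_ne_zero.mpr (by omega)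
          have hν1 : (0:ℝ) < ν + 1 := by simp [hν]; linarith
          linarith
        have hpos := gamma_pos ha₁ (j+1)
        calc min (Real.Gamma (ν + 1)) (Real.Gamma (ν + 2))
            ≤ Real.Gamma (((j+1 : ℕ) : ℝ) + ν + 1) := ih
          _ = 1 * Real.Gamma (((j+1 : ℕ) : ℝ) + ν + 1) := (one_mul _).symm
          _ ≤ (((j+1 : ℕ) : ℝ) + ν + 1) * Real.Gamma (((j+1 : ℕ) : ℝ) + ν + 1) :=
              mul_le_mul_of_nonneg_right h1 hpos.le

/-- Master summability lemma. -/
lemma summable_cx {a : ℝ} (ha₁ : -1 < a) {x : ℝ} (hx : 0 ≤ x) :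
    Summable fun k => c a k * x ^ k := by
  obtain ⟨m, hm, hmle⟩ := gamma_lb ha₁
  refine Summable.of_nonneg_of_le
    (fun k => mul_nonneg (c_nonneg ha₁ k) (pow_nonneg hx k))
    (fun k => ?_) ((Real.summable_pow_div_factorial x).mul_left (1 / m))
  have hGpos := gamma_pos ha₁ k
  have hfac : (0:ℝ) < (Nat.factorial k : ℝ) := by positivity
  have h16 : (1:ℝ) ≤ (16:ℝ) ^ k := one_le_pow₀ (by norm_num)
  have hc : c a k ≤ 1 / ((Nat.factorial k : ℝ) * m) := by
    unfold c
    apply one_div_le_one_div_of_le (by positivity)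
    calc (Nat.factorial k : ℝ) * m
        ≤ (Nat.factorial k : ℝ) * Real.Gamma ((k : ℝ) + (a - 1) / 2 + 1) :=
          mul_le_mul_of_nonneg_left (hmle k) hfac.le
      _ = (Nat.factorial k : ℝ) * Real.Gamma ((k : ℝ) + (a - 1) / 2 + 1) * 1 := by ring
      _ ≤ (Nat.factorial k : ℝ) * Real.Gamma ((k : ℝ) + (a - 1) / 2 + 1) * 16 ^ k := by
          apply mul_le_mul_of_nonneg_left h16; positivity
  calc c a k * x ^ k ≤ (1 / ((Nat.factorial k : ℝ) * m)) * x ^ k :=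
        mul_le_mul_of_nonneg_right hc (by positivity)
    _ = 1 / m * (x ^ k / (Nat.factorial k : ℝ)) := by
        rw [one_div, one_div, mul_inv]
        ring
  
/-- Terms of the series. -/
def g (a : ℝ) (k : ℕ) (y : ℝ) : ℝ := c a k * y ^ (2 * k)

def g1 (a : ℝ) (k : ℕ) (y : ℝ) : ℝ := c a k * (((2 * k : ℕ) : ℝ) * y ^ (2 * k - 1))

def g2 (a : ℝ) (k : ℕ) (y : ℝ) : ℝ :=
  c a k * (((2 * k : ℕ) : ℝ) * (((2 * k - 1 : ℕ) : ℝ) * y ^ (2 * k - 1 - 1)))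

lemma hasDerivAt_g (a : ℝ) (k : ℕ) (y : ℝ) : HasDerivAt (g a k) (g1 a k y) y :=
  (hasDerivAt_pow (2 * k) y).const_mul (c a k)

lemma hasDerivAt_g1 (a : ℝ) (k : ℕ) (y : ℝ) : HasDerivAt (g1 a k) (g2 a k y) y := by
  have h := (hasDerivAt_pow (2 * k - 1) y).const_mul (c a k * ((2 * k : ℕ) : ℝ))
  have hfun : (fun x : ℝ => c a k * ((2 * k : ℕ) : ℝ) * x ^ (2 * k - 1)) = g1 a k := by
    funext x; rw [g1]; ring
  rw [← hfun] at *
  refine h.congr_deriv ?_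
  rw [g2]; ring

lemma nat_le_four_pow (k : ℕ) : (2 * k : ℕ) ≤ 4 ^ k := by
  induction k with
  | zero => norm_num
  | succ k ih =>
    have h1 : 1 ≤ 4 ^ k := Nat.one_le_pow _ _ (by norm_num)
    have : 4 ^ (k + 1) = 4 ^ k * 4 := pow_succ 4 k
    omega

lemma pow_bound {y R : ℝ} (h : |y| ≤ R) (hR : 1 ≤ R) {n m : ℕ} (hnm : n ≤ m) :
    |y| ^ n ≤ R ^ m :=
  le_trans (pow_le_pow_left₀ (abs_nonneg y) h n) (pow_le_pow_right₀ hR hnm)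

lemma g1_bound {a : ℝ} (ha₁ : -1 < a) {y R : ℝ} (h : |y| ≤ R) (hR : 1 ≤ R) (k : ℕ) :
    |g1 a k y| ≤ c a k * (16 * R ^ 2) ^ k := by
  have hc := c_nonneg ha₁ k
  have hyb : |y| ^ (2 * k - 1) ≤ R ^ (2 * k) := pow_bound h hR (Nat.sub_le _ _)
  have h2k : ((2 * k : ℕ) : ℝ) ≤ (4 : ℝ) ^ k := by
    calc ((2 * k : ℕ) : ℝ) ≤ ((4 ^ k : ℕ) : ℝ) := by exact_mod_cast nat_le_four_pow k
      _ = (4 : ℝ) ^ k := by push_cast; ring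
  have hR0 : (0:ℝ) ≤ R := le_trans zero_le_one hR
  calc |g1 a k y| = c a k * (((2 * k : ℕ) : ℝ) * |y| ^ (2 * k - 1)) := by
        rw [g1, abs_mul, abs_mul, abs_pow, abs_of_nonneg hc,
          abs_of_nonneg (by positivity : (0:ℝ) ≤ ((2 * k : ℕ) : ℝ))]
    _ ≤ c a k * ((4 : ℝ) ^ k * R ^ (2 * k)) := by
        apply mul_le_mul_of_nonneg_left _ hc
        exact mul_le_mul h2k hyb (by positivity) (by positivity)
    _ ≤ c a k * (16 * R ^ 2) ^ k := by
        apply mul_le_mul_of_nonneg_left _ hc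
        rw [pow_mul, ← mul_pow]
        apply pow_le_pow_left₀ (by positivity)
        nlinarith [sq_nonneg R]
    
lemma g2_bound {a : ℝ} (ha₁ : -1 < a) {y R : ℝ} (h : |y| ≤ R) (hR : 1 ≤ R) (k : ℕ) :
    |g2 a k y| ≤ c a k * (16 * (16 * R ^ 2)) ^ k := by
  have hc := c_nonneg ha₁ k
  have hyb : |y| ^ (2 * k - 1 - 1) ≤ R ^ (2 * k) := pow_bound h hR (le_trans (Nat.sub_le _ _) (Nat.sub_le _ _))
  have h2k : ((2 * k : ℕ) : ℝ) ≤ (4 : ℝ) ^ k := by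
    calc ((2 * k : ℕ) : ℝ) ≤ ((4 ^ k : ℕ) : ℝ) := by exact_mod_cast nat_le_four_pow k
      _ = (4 : ℝ) ^ k := by push_cast; ring
  have h2k1 : ((2 * k - 1 : ℕ) : ℝ) ≤ (4 : ℝ) ^ k := by
    calc ((2 * k - 1 : ℕ) : ℝ) ≤ ((2 * k : ℕ) : ℝ) := by exact_mod_cast Nat.sub_le _ _
      _ ≤ (4 : ℝ) ^ k := h2k
  have hR0 : (0:ℝ) ≤ R := le_trans zero_le_one hR
  calc |g2 a k y|
      = c a k * (((2 * k : ℕ) : ℝ) * (((2 * k - 1 : ℕ) : ℝ) * |y| ^ (2 * k - 1 - 1))) := by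
        rw [g2, abs_mul, abs_mul, abs_mul, abs_pow, abs_of_nonneg hc,
          abs_of_nonneg (by positivity : (0:ℝ) ≤ ((2 * k : ℕ) : ℝ)),
          abs_of_nonneg (by positivity : (0:ℝ) ≤ ((2 * k - 1 : ℕ) : ℝ))]
    _ ≤ c a k * ((4 : ℝ) ^ k * ((4 : ℝ) ^ k * R ^ (2 * k))) := by
        apply mul_le_mul_of_nonneg_left _ hc
        apply mul_le_mul h2k _ (by positivity) (by positivity)
        exact mul_le_mul h2k1 hyb (by positivity) (by positivity)
    _ ≤ c a k * (16 * (16 * R ^ 2)) ^ k := by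
        apply mul_le_mul_of_nonneg_left _ hc
        rw [pow_mul, ← mul_pow, ← mul_pow]
        apply pow_le_pow_left₀ (by positivity)
        nlinarith [sq_nonneg R]

lemma summable_g_at {a : ℝ} (ha₁ : -1 < a) (y : ℝ) : Summable fun k => g a k y := by
  refine Summable.of_norm ?_
  refine Summable.of_nonneg_of_le (fun k => norm_nonneg _) (fun k => ?_)
    (summable_cx ha₁ (x := y ^ 2) (by positivity))
  have hc := c_nonneg ha₁ k
  have : ‖g a k y‖ = c a k * (y ^ 2) ^ k := by
    rw [g, Real.norm_eq_abs, abs_mul, abs_pow, abs_of_nonneg hc, pow_mul, sq_abs]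
  exact this.le

lemma summable_g1_at {a : ℝ} (ha₁ : -1 < a) (y : ℝ) : Summable fun k => g1 a k y := by
  refine Summable.of_norm ?_
  refine Summable.of_nonneg_of_le (fun k => norm_nonneg _) (fun k => ?_)
    (summable_cx ha₁ (x := 16 * (|y| + 1) ^ 2) (by positivity))
  simpa [Real.norm_eq_abs] using
    g1_bound ha₁ (by linarith [abs_nonneg y] : |y| ≤ |y| + 1) (by linarith [abs_nonneg y]) k

lemma summable_g2_at {a : ℝ} (ha₁ : -1 < a) (y : ℝ) : Summable fun k => g2 a k y := by
  refine Summable.of_norm ?_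
  refine Summable.of_nonneg_of_le (fun k => norm_nonneg _) (fun k => ?_)
    (summable_cx ha₁ (x := 16 * (16 * (|y| + 1) ^ 2)) (by positivity))
  simpa [Real.norm_eq_abs] using
    g2_bound ha₁ (by linarith [abs_nonneg y] : |y| ≤ |y| + 1) (by linarith [abs_nonneg y]) k

lemma hasDerivAt_F {a : ℝ} (ha₁ : -1 < a) (y : ℝ) :
    HasDerivAt (fun z => ∑' k, g a k z) (∑' k, g1 a k y) y := by
  set R : ℝ := |y| + 2 with hRdef
  have hR1 : (1:ℝ) ≤ R := by rw [hRdef]; linarith [abs_nonneg y]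
  have hyR : |y| < R := by rw [hRdef]; linarith
  have hR0 : (0:ℝ) < R := lt_of_lt_of_le one_pos hR1
  refine hasDerivAt_tsum_of_isPreconnected
    (u := fun k => c a k * (16 * R ^ 2) ^ k)
    (summable_cx ha₁ (by positivity)) Metric.isOpen_ball
    (convex_ball (0:ℝ) R).isPreconnected
    (fun k x _ => hasDerivAt_g a k x) (fun k x hx => ?_)
    (y₀ := 0) (Metric.mem_ball_self hR0)
    (summable_g_at ha₁ 0) (by rwa [Metric.mem_ball, Real.dist_eq, sub_zero])
  rw [Metric.mem_ball, Real.dist_eq, sub_zero] at hx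
  simpa [Real.norm_eq_abs] using g1_bound ha₁ hx.le hR1 k

lemma hasDerivAt_F1 {a : ℝ} (ha₁ : -1 < a) (y : ℝ) :
    HasDerivAt (fun z => ∑' k, g1 a k z) (∑' k, g2 a k y) y := by
  set R : ℝ := |y| + 2 with hRdef
  have hR1 : (1:ℝ) ≤ R := by rw [hRdef]; linarith [abs_nonneg y]
  have hyR : |y| < R := by rw [hRdef]; linarith
  have hR0 : (0:ℝ) < R := lt_of_lt_of_le one_pos hR1
  refine hasDerivAt_tsum_of_isPreconnected
    (u := fun k => c a k * (16 * (16 * R ^ 2)) ^ k)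
    (summable_cx ha₁ (by positivity)) Metric.isOpen_ball
    (convex_ball (0:ℝ) R).isPreconnected
    (fun k x _ => hasDerivAt_g1 a k x) (fun k x hx => ?_)
    (y₀ := 0) (Metric.mem_ball_self hR0)
    (summable_g1_at ha₁ 0) (by rwa [Metric.mem_ball, Real.dist_eq, sub_zero])
  rw [Metric.mem_ball, Real.dist_eq, sub_zero] at hx
  simpa [Real.norm_eq_abs] using g2_bound ha₁ hx.le hR1 k

/-- The key series identity: `z F'' + a F' = (z/4) F`. -/
lemma key_identity {a : ℝ} (ha₁ : -1 < a) {z : ℝ} (hz : 0 < z) :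
    z * (∑' k, g2 a k z) + a * (∑' k, g1 a k z) = z / 4 * ∑' k, g a k z := by
  have Sg := summable_g_at ha₁ z
  have Sg1 := summable_g1_at ha₁ z
  have Sg2 := summable_g2_at ha₁ z
  have hB : HasSum (fun k => z / 4 * g a k z) (z / 4 * ∑' k, g a k z) :=
    Sg.hasSum.mul_left _
  have hT : HasSum (fun k => z * g2 a k z + a * g1 a k z)
      (z * (∑' k, g2 a k z) + a * (∑' k, g1 a k z)) :=
    (Sg2.hasSum.mul_left z).add (Sg1.hasSum.mul_left a)
  have hpt : ∀ k : ℕ, z * g2 a (k + 1) z + a * g1 a (k + 1) z = z / 4 * g a k z := by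
    intro k
    have e1 : 2 * (k + 1) = 2 * k + 2 := by ring
    have e2 : 2 * k + 2 - 1 = 2 * k + 1 := by omega
    have e3 : 2 * k + 1 - 1 = 2 * k := by omega
    have hrec := c_rec ha₁ k
    rw [g, g1, g2, e1, e2, e3, ← hrec]
    push_cast
    ring
  have hshift : HasSum (fun k => z * g2 a (k + 1) z + a * g1 a (k + 1) z)
      (z / 4 * ∑' k, g a k z) := by
    have heq : (fun k => z * g2 a (k + 1) z + a * g1 a (k + 1) z)
        = fun k => z / 4 * g a k z := funext hpt
    rw [heq]; exact hB
  have h0 : z * g2 a 0 z + a * g1 a 0 z = 0 := by simp [g1, g2]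
  have hfull : HasSum (fun k => z * g2 a k z + a * g1 a k z)
      (z / 4 * ∑' k, g a k z) := by
    have hsum0 : ∑ i ∈ Finset.range 1, (z * g2 a i z + a * g1 a i z) = 0 := by
      rw [Finset.sum_range_one]; exact h0
    refine (hasSum_nat_add_iff' (f := fun k => z * g2 a k z + a * g1 a k z) 1).mp ?_
    rw [hsum0, sub_zero]
    exact hshift
  exact hT.unique hfull

end H1Ode

open H1Ode

/-- `h₁` satisfies the ODE `z h'' + (z+a) h' + (a/2) h = 0` for all `z > 0`. -/
theorem h₁_ode (a : ℝ) (ha₁ : -1 < a) (ha₂ : a < 1) (z : ℝ) (hz : 0 < z) :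
    z * deriv (deriv (h₁ a)) z + (z + a) * deriv (h₁ a) z + a / 2 * h₁ a z = 0 := by
  -- rewrite h₁ in terms of g
  have hh : h₁ a = fun y => Real.exp (-y / 2) * ∑' k, g a k y := by
    funext y
    unfold h₁
    congr 1
    refine tsum_congr fun k => ?_
    rw [g, c, div_pow]
    have h4 : (4:ℝ) ^ (2 * k) = 16 ^ k := by
      rw [two_mul, pow_add, ← mul_pow]; norm_num
    rw [h4]
    ring
  have hexp : ∀ y : ℝ, HasDerivAt (fun x : ℝ => Real.exp (-x / 2)) (Real.exp (-y / 2) * (-1 / 2)) y := by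
    intro y
    have h1 : HasDerivAt (fun x : ℝ => -x / 2) (-1 / 2) y := by
      simpa using ((hasDerivAt_id y).neg.div_const 2)
    exact h1.exp
  -- first derivative of h₁
  have hFd : ∀ y : ℝ, HasDerivAt (h₁ a)
      (Real.exp (-y / 2) * (-1 / 2) * (∑' k, g a k y)
        + Real.exp (-y / 2) * (∑' k, g1 a k y)) y := by
    intro y
    rw [hh]
    exact (hexp y).mul (hasDerivAt_F ha₁ y)
  have hd1 : deriv (h₁ a) = fun y =>
      Real.exp (-y / 2) * (-1 / 2) * (∑' k, g a k y)
        + Real.exp (-y / 2) * (∑' k, g1 a k y) :=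
    funext fun y => (hFd y).deriv
  -- second derivative
  have hFdd : HasDerivAt (fun y =>
      Real.exp (-y / 2) * (-1 / 2) * (∑' k, g a k y)
        + Real.exp (-y / 2) * (∑' k, g1 a k y))
      ((Real.exp (-z / 2) * (-1 / 2) * (-1 / 2) * (∑' k, g a k z)
          + Real.exp (-z / 2) * (-1 / 2) * (∑' k, g1 a k z))
        + (Real.exp (-z / 2) * (-1 / 2) * (∑' k, g1 a k z)
          + Real.exp (-z / 2) * (∑' k, g2 a k z))) z := by
    exact (((hexp z).mul_const (-1 / 2)).mul (hasDerivAt_F ha₁ z)).add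
      ((hexp z).mul (hasDerivAt_F1 ha₁ z))
  have hd2 : deriv (deriv (h₁ a)) z =
      (Real.exp (-z / 2) * (-1 / 2) * (-1 / 2) * (∑' k, g a k z)
          + Real.exp (-z / 2) * (-1 / 2) * (∑' k, g1 a k z))
        + (Real.exp (-z / 2) * (-1 / 2) * (∑' k, g1 a k z)
          + Real.exp (-z / 2) * (∑' k, g2 a k z)) := by
    rw [hd1]
    exact hFdd.deriv
  have hkey := key_identity ha₁ hz
  rw [hd2, (hFd z).deriv, hh]
  linear_combination Real.exp (-z / 2) * hkey
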